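/- Let R be a commutative noetherian integral domain that is not a field, with field of fractions Q. Then, as an R-module, Q admits a finitely generated submodule N with Q/N torsion (indeed Q ⊗_R Q is one-dimensional over Q), but there exists no torsion R-submodule T of Q such that Q/T is a finitely generated R-module. -/

import Mathlib

universe u v

/-- Let `R` be a noetherian domain that is not a field, with fraction field `Q`. Then `Q`, as an
`R`-module, has a finitely generated submodule with torsion quotient (indeed `Q ⊗_R Q` is
one-dimensional over `Q`), but there is no torsion `R`-submodule `T ⊆ Q` with `Q/T` a finitely
generated `R`-module. -/
theorem fractionRing_minimax_not_maxmini
    {R : Type u} [CommRing R] [IsDomain R] [IsNoetherianRing R] (hR : ¬IsField R) :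
    (∃ N : Submodule R (FractionRing R), N.FG ∧ Module.IsTorsion R (FractionRing R ⧸ N)) ∧
      Module.finrank (FractionRing R) (TensorProduct R (FractionRing R) (FractionRing R)) = 1 ∧
      ¬∃ T : Submodule R (FractionRing R),
        Module.IsTorsion R ↥T ∧ Module.Finite R (FractionRing R ⧸ T) := by
  refine ⟨⟨Submodule.span R {(1 : FractionRing R)}, Submodule.fg_span_singleton _, ?_⟩, ?_, ?_⟩
  · -- torsion quotient
    intro x
    obtain ⟨q, rfl⟩ := Submodule.Quotient.mk_surjective _ x
    obtain ⟨⟨a, b⟩, h⟩ := IsLocalization.mk'_surjective (nonZeroDivisors R) q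
    refine ⟨b, ?_⟩
    rw [Submonoid.smul_def]
    rw [← Submodule.Quotient.mk_smul, Submodule.Quotient.mk_eq_zero, ← h, Algebra.smul_def,
      IsLocalization.mk'_spec', Algebra.algebraMap_eq_smul_one]
    exact Submodule.smul_mem _ a (Submodule.mem_span_singleton_self _)
  · -- finrank 1
    have e := (IsLocalization.algebraLid (S := nonZeroDivisors R)
      (A := FractionRing R) (B := FractionRing R)).toLinearEquiv
    rw [e.finrank_eq, Module.finrank_self]
  · rintro ⟨T, hT, hfin⟩
    -- T is torsion-free as a submodule of Q, so T = ⊥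
    have hTbot : T = ⊥ := by
      rw [Submodule.eq_bot_iff]
      intro x hx
      obtain ⟨⟨r, hr⟩, h⟩ := @hT ⟨x, hx⟩
      have h2 : r • x = 0 := congrArg Subtype.val h
      rcases smul_eq_zero.mp h2 with h' | h'
      · exact absurd h' (nonZeroDivisors.ne_zero hr)
      · exact h'
    subst hTbot
    have : Module.Finite R (FractionRing R) :=
      Module.Finite.equiv (Submodule.quotEquivOfEqBot ⊥ rfl)
    have : Algebra.IsIntegral R (FractionRing R) := Algebra.IsIntegral.of_finite R _
    exact hR (isField_of_isIntegral_of_isField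
      (IsFractionRing.injective R (FractionRing R)) (Field.toIsField _))
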